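/- Let N ≥ 1, let θ_k (k = 1,…,2N) be equispaced points in the periodic interval [−π, π] with spacing π/N, and set x_k = (1/2)·tan(θ_k/2). Then the truncated Malmquist–Takenaka system {φ_n}_{n=−N}^{N−1} is orthonormal with respect to the discrete inner product ⟨f, g⟩_N = (π/(4N))·Σ_{k=1}^{2N} f(x_k)·conj(g(x_k))·(1+4x_k²): that is, ⟨φ_ℓ, φ_m⟩_N = δ_{ℓ,m} for all −N ≤ ℓ, m ≤ N−1. -/

import Mathlib

open Complex

noncomputable def MT (n : ℤ) (x : ℝ) : ℂ :=
  (Real.sqrt (2 / Real.pi) : ℂ) * I ^ n * (1 + 2 * I * x) ^ n / (1 - 2 * I * x) ^ (n + 1)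

/-- Equispaced angles `θ_k = -π + (k - 1/2)π/N` for `k = 1,…,2N`, here indexed `k = 0,…,2N-1`. -/
noncomputable def θpt (N : ℕ) (k : ℕ) : ℝ :=
  -Real.pi + ((k : ℝ) + 1 / 2) * Real.pi / N

noncomputable def xpt (N : ℕ) (k : ℕ) : ℝ := Real.tan (θpt N k / 2) / 2

lemma MT_exp_half (x : ℝ) : Complex.exp ((x:ℝ) * I) = (Real.cos x : ℂ) + (Real.sin x : ℂ) * I := by
  rw [Complex.exp_mul_I, Complex.ofReal_cos, Complex.ofReal_sin]

lemma MT_frac_exp (θ : ℝ) (hc : Real.cos (θ/2) ≠ 0) :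
    (1 + (Real.tan (θ/2) : ℂ) * I) / (1 - (Real.tan (θ/2) : ℂ) * I) = Complex.exp (θ * I) := by
  have hc' : (Real.cos (θ/2) : ℂ) ≠ 0 := Complex.ofReal_ne_zero.mpr hc
  have hc2 : Complex.cos ((θ:ℂ)/2) ≠ 0 := by
    rw [show ((θ:ℂ)/2) = ((θ/2:ℝ):ℂ) by push_cast; ring, ← Complex.ofReal_cos]; exact hc'
  have ha : (1 + (Real.tan (θ/2) : ℂ) * I) = Complex.exp ((θ/2 : ℝ) * I) / (Real.cos (θ/2) : ℂ) := by
    rw [MT_exp_half, Real.tan_eq_sin_div_cos, Complex.ofReal_div]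
    field_simp
  have hb : (1 - (Real.tan (θ/2) : ℂ) * I) = Complex.exp (-(θ/2 : ℝ) * I) / (Real.cos (θ/2) : ℂ) := by
    have h2 : Complex.exp (-(θ/2 : ℝ) * I) = (Real.cos (θ/2) : ℂ) - (Real.sin (θ/2) : ℂ) * I := by
      have := MT_exp_half (-(θ/2))
      rw [Real.cos_neg, Real.sin_neg] at this
      push_cast at this ⊢
      rw [this]; ring_nf
    rw [h2, Real.tan_eq_sin_div_cos, Complex.ofReal_div]
    field_simp
  rw [ha, hb, div_div_div_cancel_right₀ hc', ← Complex.exp_sub]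
  congr 1
  push_cast
  ring

lemma MT_key (θ : ℝ) (hc : Real.cos (θ/2) ≠ 0) (l m : ℤ) :
    MT l (Real.tan (θ/2)/2) * (starRingEnd ℂ) (MT m (Real.tan (θ/2)/2)) *
      ((1 + 4 * (Real.tan (θ/2)/2) ^ 2 : ℝ) : ℂ)
    = ((2 / Real.pi : ℝ) : ℂ) * I ^ (l - m) * Complex.exp (θ * I) ^ (l - m) := by
  set t : ℝ := Real.tan (θ/2) with ht
  set a : ℂ := 1 + (t:ℂ) * I with hadef
  set b : ℂ := 1 - (t:ℂ) * I with hbdef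
  have ha0 : a ≠ 0 := by
    intro h
    have := congrArg Complex.re h
    simp [hadef] at this
  have hb0 : b ≠ 0 := by
    intro h
    have := congrArg Complex.re h
    simp [hbdef] at this
  have hI0 : (I : ℂ) ≠ 0 := I_ne_zero
  have hconj_a : (starRingEnd ℂ) a = b := by
    simp [hadef, hbdef, map_add, map_mul, Complex.conj_ofReal, Complex.conj_I]
    ring
  have hconj_b : (starRingEnd ℂ) b = a := by
    simp [hadef, hbdef, map_sub, map_mul, Complex.conj_ofReal, Complex.conj_I]
  have hconjI : (starRingEnd ℂ) I = -I := Complex.conj_I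
  have hab : a * b = ((1 + 4 * (t/2)^2 : ℝ) : ℂ) := by
    push_cast
    simp only [hadef, hbdef]
    have : (I:ℂ)^2 = -1 := Complex.I_sq
    linear_combination (-(t:ℂ)^2) * this
  have hxa : (1 + 2 * I * ((t/2 : ℝ) : ℂ)) = a := by push_cast [hadef]; ring
  have hxb : (1 - 2 * I * ((t/2 : ℝ) : ℂ)) = b := by push_cast [hbdef]; ring
  have hsq : ((Real.sqrt (2 / Real.pi) : ℝ) : ℂ) * ((Real.sqrt (2 / Real.pi) : ℝ) : ℂ)
      = ((2 / Real.pi : ℝ) : ℂ) := by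
    rw [← Complex.ofReal_mul, Real.mul_self_sqrt (by positivity : (0:ℝ) ≤ 2 / Real.pi)]
  have hImI : I ^ l * (starRingEnd ℂ) (I ^ m) = I ^ (l - m) := by
    rw [map_zpow₀, hconjI]
    rw [show (-I : ℂ) = I⁻¹ by simp [Complex.inv_I]]
    rw [inv_zpow, ← zpow_neg, ← zpow_add₀ hI0]
    congr 1
  unfold MT
  rw [hxa, hxb]
  simp only [map_div₀, map_mul, map_zpow₀, Complex.conj_ofReal, hconj_a, hconj_b]
  rw [← hab]
  have hfinal : (Real.sqrt (2 / Real.pi) : ℂ) * I ^ l * a ^ l / b ^ (l + 1) *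
      ((Real.sqrt (2 / Real.pi) : ℂ) * (starRingEnd ℂ) I ^ m * b ^ m / a ^ (m + 1)) * (a * b)
      = ((2 / Real.pi : ℝ) : ℂ) * I ^ (l - m) * (a / b) ^ (l - m) := by
    rw [div_zpow]
    have e1 : a ^ (l - m) = a ^ l * a / a ^ (m + 1) := by
      rw [show l - m = (l + 1) - (m + 1) by ring, zpow_sub₀ ha0, zpow_add₀ ha0, zpow_one]
    have e2 : (b ^ (l - m))⁻¹ = b ^ m * b / b ^ (l + 1) := by
      rw [← zpow_neg, show -(l - m) = (m + 1) - (l + 1) by ring, zpow_sub₀ hb0,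
        zpow_add₀ hb0, zpow_one]
    rw [div_eq_mul_inv (a ^ (l-m)), e1, e2, ← hsq, ← hImI, hconjI]
    have hal : a ^ l ≠ 0 := zpow_ne_zero _ ha0
    have ham : a ^ (m+1) ≠ 0 := zpow_ne_zero _ ha0
    have hbl : b ^ (l+1) ≠ 0 := zpow_ne_zero _ hb0
    have hbm : b ^ m ≠ 0 := zpow_ne_zero _ hb0
    rw [map_zpow₀, hconjI]
    field_simp
  rw [hfinal]
  congr 1
  rw [← MT_frac_exp θ hc]

lemma MT_cos_ne (N : ℕ) (hN : 1 ≤ N) (k : ℕ) (hk : k < 2 * N) :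
    Real.cos (θpt N k / 2) ≠ 0 := by
  have hπ := Real.pi_pos
  have hN' : (1:ℝ) ≤ N := by exact_mod_cast hN
  have hk' : (k:ℝ) < 2 * N := by exact_mod_cast hk
  have hNpos : (0:ℝ) < N := by linarith
  apply ne_of_gt
  apply Real.cos_pos_of_mem_Ioo
  constructor
  · unfold θpt
    have h1 : 0 < ((k:ℝ) + 1/2) * Real.pi / N := by positivity
    linarith
  · unfold θpt
    have h2 : ((k:ℝ) + 1/2) * Real.pi / N < 2 * Real.pi := by
      rw [div_lt_iff₀ hNpos]
      have hk2 : (k:ℝ) ≤ 2 * N - 1 := by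
        have : (k:ℝ) + 1 ≤ 2 * N := by exact_mod_cast hk
        linarith
      nlinarith
    linarith

lemma MT_exp_sum (N : ℕ) (hN : 1 ≤ N) (d : ℤ) (hd0 : d ≠ 0) (hd : d.natAbs < 2 * N) :
    ∑ k ∈ Finset.range (2 * N), Complex.exp ((d:ℂ) * (θpt N k : ℝ) * I) = 0 := by
  have hπ := Real.pi_pos
  have hNne : (N:ℝ) ≠ 0 := by positivity
  set α : ℝ := -Real.pi + Real.pi / (2 * N) with hα
  set β : ℝ := Real.pi / N with hβ
  have hθ : ∀ k : ℕ, θpt N k = α + k * β := by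
    intro k; unfold θpt; rw [hα, hβ]; field_simp; ring
  set r : ℂ := Complex.exp ((d:ℂ) * (β:ℝ) * I) with hr
  have hterm : ∀ k : ℕ, Complex.exp ((d:ℂ) * (θpt N k : ℝ) * I)
      = Complex.exp ((d:ℂ) * (α:ℝ) * I) * r ^ k := by
    intro k
    rw [hθ k, hr, ← Complex.exp_nat_mul, ← Complex.exp_add]
    congr 1
    push_cast
    ring
  have hrne : r ≠ 1 := by
    rw [hr]
    intro h
    rw [Complex.exp_eq_one_iff] at h
    obtain ⟨n, hn⟩ := h
    have him := congrArg Complex.im hn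
    simp [Complex.mul_im, Complex.mul_re] at him
    have : (d:ℝ) * β = n * (2 * Real.pi) := by
      convert him using 1 <;> push_cast <;> ring_nf
    rw [hβ] at this
    have hd2 : (d:ℝ) = 2 * N * n := by
      field_simp at this
      nlinarith [this]
    have : d = 2 * N * n := by exact_mod_cast hd2
    rcases eq_or_ne n 0 with h0 | h0
    · simp [h0] at this; exact hd0 this
    · have h1 : (1:ℤ) ≤ |n| := Int.one_le_abs h0
      have h3 : (2*(N:ℤ)) ≤ |d| := by
        rw [this, abs_mul, abs_of_nonneg (show (0:ℤ) ≤ 2*(N:ℤ) by positivity)]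
        nlinarith
      have h4 : |d| = (d.natAbs : ℤ) := Int.abs_eq_natAbs d
      omega
  have hr2N : r ^ (2 * N) = 1 := by
    rw [hr, ← Complex.exp_nat_mul]
    have : (2 * N : ℕ) * ((d:ℂ) * (β:ℝ) * I) = (d:ℤ) * (2 * Real.pi * I) := by
      have hNC : (N:ℂ) ≠ 0 := Nat.cast_ne_zero.mpr (by omega)
      push_cast
      rw [hβ]
      push_cast
      field_simp
    rw [this, Complex.exp_int_mul_two_pi_mul_I]
  calc ∑ k ∈ Finset.range (2 * N), Complex.exp ((d:ℂ) * (θpt N k : ℝ) * I)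
      = ∑ k ∈ Finset.range (2 * N), Complex.exp ((d:ℂ) * (α:ℝ) * I) * r ^ k := by
        exact Finset.sum_congr rfl fun k _ => hterm k
    _ = Complex.exp ((d:ℂ) * (α:ℝ) * I) * ∑ k ∈ Finset.range (2 * N), r ^ k := by
        rw [Finset.mul_sum]
    _ = 0 := by
        rw [geom_sum_eq hrne, hr2N]
        simp

theorem MT_discrete_orthonormal (N : ℕ) (hN : 1 ≤ N) (l m : ℤ)
    (hl₁ : -(N : ℤ) ≤ l) (hl₂ : l ≤ (N : ℤ) - 1) (hm₁ : -(N : ℤ) ≤ m) (hm₂ : m ≤ (N : ℤ) - 1) :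
    ((Real.pi / (4 * N) : ℝ) : ℂ) *
        ∑ k ∈ Finset.range (2 * N),
          MT l (xpt N k) * (starRingEnd ℂ) (MT m (xpt N k)) * ((1 + 4 * (xpt N k) ^ 2 : ℝ) : ℂ)
      = if l = m then 1 else 0 := by
  have hπ := Real.pi_pos
  have hkey : ∀ k ∈ Finset.range (2 * N),
      MT l (xpt N k) * (starRingEnd ℂ) (MT m (xpt N k)) * ((1 + 4 * (xpt N k) ^ 2 : ℝ) : ℂ)
      = ((2 / Real.pi : ℝ) : ℂ) * I ^ (l - m) *
          Complex.exp (((l - m : ℤ) : ℂ) * (θpt N k : ℝ) * I) := by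
    intro k hk
    have hc := MT_cos_ne N hN k (Finset.mem_range.mp hk)
    have h := MT_key (θpt N k) hc l m
    rw [show xpt N k = Real.tan (θpt N k / 2) / 2 from rfl, h]
    congr 1
    rw [← Complex.exp_int_mul]
    congr 1
    ring
  rw [Finset.sum_congr rfl hkey]
  by_cases h : l = m
  · subst h
    rw [if_pos rfl]
    simp only [sub_self, zpow_zero, mul_one, Int.cast_zero, zero_mul, Complex.exp_zero]
    rw [Finset.sum_const, Finset.card_range]
    have hNC : (N:ℂ) ≠ 0 := Nat.cast_ne_zero.mpr (by omega)
    have hπC : ((Real.pi:ℝ):ℂ) ≠ 0 := Complex.ofReal_ne_zero.mpr (ne_of_gt hπ)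
    push_cast
    field_simp
    ring_nf
    simp [hπC]
  · rw [if_neg h]
    rw [← Finset.mul_sum]
    rw [MT_exp_sum N hN (l - m) (sub_ne_zero.mpr h) (by omega)]
    simp
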